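/- Let d ∈ ℕ, T ∈ [0,∞), f ∈ C([0,T]×ℝ^d,ℝ^d), ξ ∈ ℝ^d, let (Ω,ℱ,ℙ) be a probability space, let W: [0,T]×Ω → ℝ^d be a stochastic process with continuous sample paths, let ‖·‖ be a norm on ℝ^d, assume for all r ∈ (0,∞) that sup_{t∈[0,T]} sup{ ‖f(t,x)−f(t,y)‖/‖x−y‖ : x,y ∈ ℝ^d, x ≠ y, ‖x‖+‖y‖ ≤ r } < ∞, and let Y: [0,T]×Ω → ℝ^d satisfy for all t ∈ [0,T] and ω ∈ Ω that s ↦ Y(s,ω) is continuous and Y(t,ω) = ξ + ∫₀^t f(s,Y(s,ω)) ds + W(t,ω). Then Y is a stochastic process, i.e. for every t ∈ [0,T] the map ω ↦ Y(t,ω) is ℱ/ℬ(ℝ^d)-measurable. -/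

import Mathlib

open MeasureTheory ProbabilityTheory Filter
open scoped ENNReal NNReal

noncomputable section

/-- `N` is a norm on the real vector space `E`. -/
def IsNorm {E : Type*} [AddCommGroup E] [Module ℝ E] (N : E → ℝ) : Prop :=
  (∀ x, N x = 0 ↔ x = 0) ∧ (∀ (a : ℝ) (x : E), N (a • x) = |a| * N x) ∧
    ∀ x y, N (x + y) ≤ N x + N y

namespace SDEAux

variable {E : Type*} [AddCommGroup E] [Module ℝ E] {N : E → ℝ}

lemma isNorm_zero (h : IsNorm N) : N 0 = 0 := (h.1 0).2 rfl

lemma isNorm_neg (h : IsNorm N) (x : E) : N (-x) = N x := by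
  rw [← neg_one_smul ℝ x, h.2.1]; simp

lemma isNorm_nonneg (h : IsNorm N) (x : E) : 0 ≤ N x := by
  have h1 := h.2.2 x (-x)
  rw [add_neg_cancel, isNorm_zero h, isNorm_neg h] at h1
  linarith

lemma isNorm_sum (h : IsNorm N) {ι : Type*} (s : Finset ι) (g : ι → E) :
    N (∑ i ∈ s, g i) ≤ ∑ i ∈ s, N (g i) := by
  classical
  induction s using Finset.cons_induction with
  | empty => simp [isNorm_zero h]
  | cons a s ha ih =>
    rw [Finset.sum_cons, Finset.sum_cons]
    exact le_trans (h.2.2 _ _) (by linarith)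

lemma exists_nd_le (d : ℕ) {N : (Fin d → ℝ) → ℝ} (h : IsNorm N) :
    ∃ C : ℝ, 0 < C ∧ ∀ x, N x ≤ C * ‖x‖ := by
  classical
  set e : Fin d → (Fin d → ℝ) := fun i => fun j => if i = j then (1 : ℝ) else 0 with he
  set C₀ : ℝ := ∑ i, N (e i) with hC₀
  have hC₀nn : 0 ≤ C₀ := Finset.sum_nonneg fun i _ => isNorm_nonneg h _
  refine ⟨C₀ + 1, by positivity, fun x => ?_⟩
  have hx : x = ∑ i, x i • e i := pi_eq_sum_univ x
  calc N x = N (∑ i, x i • e i) := by rw [← hx]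
    _ ≤ ∑ i, N (x i • e i) := isNorm_sum h _ _
    _ ≤ ∑ i, ‖x‖ * N (e i) := by
        refine Finset.sum_le_sum fun i _ => ?_
        rw [h.2.1]
        exact mul_le_mul_of_nonneg_right
          (by simpa [Real.norm_eq_abs] using norm_le_pi_norm x i) (isNorm_nonneg h _)
    _ = C₀ * ‖x‖ := by rw [← Finset.mul_sum, hC₀]; ring
    _ ≤ (C₀ + 1) * ‖x‖ := by nlinarith [norm_nonneg x]

lemma exists_le_nd (d : ℕ) (hd : 0 < d) {N : (Fin d → ℝ) → ℝ} (h : IsNorm N) :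
    ∃ c : ℝ, 0 < c ∧ ∀ x, c * ‖x‖ ≤ N x := by
  haveI : Nonempty (Fin d) := ⟨⟨0, hd⟩⟩
  obtain ⟨C, hC, hCle⟩ := exists_nd_le d h
  have hcont : Continuous N := by
    have hlip : LipschitzWith ⟨C, hC.le⟩ N := by
      apply LipschitzWith.of_dist_le_mul
      intro x y
      rw [Real.dist_eq, dist_eq_norm]
      have h1 : N x - N y ≤ N (x - y) := by
        have := h.2.2 (x - y) y; simp only [sub_add_cancel] at this; linarith
      have h2 : N y - N x ≤ N (x - y) := by
        have := h.2.2 (y - x) x; simp only [sub_add_cancel] at this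
        rw [← isNorm_neg h (x - y)]; simp only [neg_sub]; linarith
      have h3 : |N x - N y| ≤ N (x - y) := abs_sub_le_iff.2 ⟨h1, h2⟩
      exact le_trans h3 (hCle _)
    exact hlip.continuous
  obtain ⟨x₀, hx₀mem, hx₀min⟩ := (isCompact_sphere (0 : Fin d → ℝ) 1).exists_isMinOn
    (NormedSpace.sphere_nonempty.mpr zero_le_one) hcont.continuousOn
  have hx₀norm : ‖x₀‖ = 1 := by simpa using mem_sphere_zero_iff_norm.1 hx₀mem
  have hx₀ne : x₀ ≠ 0 := by intro h0; rw [h0] at hx₀norm; simp at hx₀norm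
  have hc : 0 < N x₀ := lt_of_le_of_ne (isNorm_nonneg h _)
    (fun h0 => hx₀ne ((h.1 x₀).1 h0.symm))
  refine ⟨N x₀, hc, fun x => ?_⟩
  rcases eq_or_ne x 0 with rfl | hx
  · simp [isNorm_zero h]
  · have hxn : (0 : ℝ) < ‖x‖ := norm_pos_iff.2 hx
    set u : Fin d → ℝ := ‖x‖⁻¹ • x with hu
    have hun : u ∈ Metric.sphere (0 : Fin d → ℝ) 1 := by
      rw [mem_sphere_zero_iff_norm, hu, norm_smul]
      simp [Real.norm_eq_abs, abs_of_nonneg (inv_nonneg.2 hxn.le), inv_mul_cancel₀ hxn.ne']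
    have hxu : x = ‖x‖ • u := by
      rw [hu, smul_smul, mul_inv_cancel₀ hxn.ne', one_smul]
    have hNx : N x = ‖x‖ * N u := by
      conv_lhs => rw [hxu]
      rw [h.2.1, abs_of_nonneg (norm_nonneg x)]
    calc N x₀ * ‖x‖ ≤ N u * ‖x‖ :=
          mul_le_mul_of_nonneg_right (hx₀min hun) hxn.le
      _ = N x := by rw [hNx]; ring



variable {E : Type*} [NormedAddCommGroup E] [NormedSpace ℝ E]

/-- Radial projection onto the closed ball of radius `R`. -/
noncomputable def projB (R : ℝ) (x : E) : E :=
  if ‖x‖ ≤ R then x else (R * ‖x‖⁻¹) • x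

lemma projB_eq_self {R : ℝ} {x : E} (h : ‖x‖ ≤ R) : projB R x = x := if_pos h

lemma norm_projB_le {R : ℝ} (hR : 0 ≤ R) (x : E) : ‖projB R x‖ ≤ R := by
  unfold projB; split_ifs with h
  · exact h
  · push_neg at h
    have hx : 0 < ‖x‖ := lt_of_le_of_lt hR h
    rw [norm_smul, Real.norm_eq_abs, abs_of_nonneg (by positivity), mul_assoc,
      inv_mul_cancel₀ hx.ne', mul_one]

lemma norm_projB_sub_le {R : ℝ} (hR : 0 ≤ R) (x y : E) :
    ‖projB R x - projB R y‖ ≤ 2 * ‖x - y‖ := by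
  wlog hxy : ‖y‖ ≤ ‖x‖ with H
  · rw [norm_sub_rev (projB R x) (projB R y), norm_sub_rev x y]
    exact H hR y x (le_of_not_ge hxy)
  by_cases h1 : ‖x‖ ≤ R
  · rw [projB_eq_self h1, projB_eq_self (le_trans hxy h1)]
    nlinarith [norm_nonneg (x - y)]
  · push_neg at h1
    have hxpos : 0 < ‖x‖ := lt_of_le_of_lt hR h1
    have hpx : projB R x = (R * ‖x‖⁻¹) • x := if_neg (not_le.2 h1)
    by_cases h2 : ‖y‖ ≤ R
    · rw [hpx, projB_eq_self h2]
      have e1 : ((R * ‖x‖⁻¹) • x : E) - y = ((R * ‖x‖⁻¹ - 1) • x) + (x - y) := by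
        rw [sub_smul, one_smul]; abel
      have hle1 : R * ‖x‖⁻¹ - 1 ≤ 0 := by
        have : R * ‖x‖⁻¹ ≤ 1 := by
          rw [mul_inv_le_iff₀ hxpos, one_mul]; exact h1.le
        linarith
      have e2' : (-(R * ‖x‖⁻¹ - 1)) * ‖x‖ = ‖x‖ - R := by
        field_simp
        ring
      have e2 : ‖((R * ‖x‖⁻¹ - 1) • x : E)‖ = ‖x‖ - R := by
        rw [norm_smul, Real.norm_eq_abs, abs_of_nonpos hle1, e2']
      calc ‖((R * ‖x‖⁻¹) • x : E) - y‖ ≤ ‖((R * ‖x‖⁻¹ - 1) • x : E)‖ + ‖x - y‖ := by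
            rw [e1]; exact norm_add_le _ _
        _ = (‖x‖ - R) + ‖x - y‖ := by rw [e2]
        _ ≤ 2 * ‖x - y‖ := by
            have h3 : ‖x‖ - ‖y‖ ≤ ‖x - y‖ := norm_sub_norm_le x y
            linarith
    · push_neg at h2
      have hypos : 0 < ‖y‖ := lt_of_le_of_lt hR h2
      have hpy : projB R y = (R * ‖y‖⁻¹) • y := if_neg (not_le.2 h2)
      rw [hpx, hpy]
      set a : ℝ := R * ‖x‖⁻¹ with ha
      set b : ℝ := R * ‖y‖⁻¹ with hb
      have ha1 : a ≤ 1 := by rw [ha, mul_inv_le_iff₀ hxpos, one_mul]; exact h1.le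
      have ha0 : 0 ≤ a := by positivity
      have hab : a ≤ b := by
        rw [ha, hb]; gcongr
      have e1 : (a • x : E) - b • y = a • (x - y) + (a - b) • y := by
        rw [smul_sub, sub_smul]; abel
      have e2 : ‖((a - b) • y : E)‖ = (b - a) * ‖y‖ := by
        rw [norm_smul, Real.norm_eq_abs, abs_of_nonpos (by linarith)]; ring
      have e3 : (b - a) * ‖y‖ ≤ ‖x‖ - ‖y‖ := by
        have : (b - a) * ‖y‖ = R * (‖x‖ - ‖y‖) * ‖x‖⁻¹ := by
          rw [hb, ha]; field_simp
        rw [this]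
        calc R * (‖x‖ - ‖y‖) * ‖x‖⁻¹ ≤ ‖x‖ * (‖x‖ - ‖y‖) * ‖x‖⁻¹ := by
              have hs : 0 ≤ ‖x‖ - ‖y‖ := by linarith
              have hi : (0:ℝ) ≤ ‖x‖⁻¹ := by positivity
              exact mul_le_mul_of_nonneg_right
                (mul_le_mul_of_nonneg_right h1.le hs) hi
          _ = ‖x‖ - ‖y‖ := by field_simp
      have h3 : ‖x‖ - ‖y‖ ≤ ‖x - y‖ := norm_sub_norm_le x y
      calc ‖(a • x : E) - b • y‖ ≤ ‖(a • (x - y) : E)‖ + ‖((a - b) • y : E)‖ := by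
            rw [e1]; exact norm_add_le _ _
        _ = a * ‖x - y‖ + (b - a) * ‖y‖ := by
            rw [e2, norm_smul, Real.norm_eq_abs, abs_of_nonneg ha0]
        _ ≤ 2 * ‖x - y‖ := by nlinarith [norm_nonneg (x - y)]

lemma continuous_projB {R : ℝ} (hR : 0 ≤ R) : Continuous (projB R : E → E) := by
  have hlip : LipschitzWith 2 (projB R : E → E) := by
    apply LipschitzWith.of_dist_le_mul
    intro x y
    rw [dist_eq_norm, dist_eq_norm]
    simpa using norm_projB_sub_le hR x y
  exact hlip.continuous

/-- Picard iterates with additive noise path `b`, vector field `g` and time clamp `τ`. -/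
noncomputable def picard (ξ : E) (b : ℝ → E) (g : ℝ → E → E) (τ : ℝ → ℝ) : ℕ → ℝ → E
  | 0 => fun u => ξ + b u
  | (n + 1) => fun u => ξ + b u + ∫ s in (0:ℝ)..u, g s (picard ξ b g τ n (τ s))

lemma iterate_bound {T K D : ℝ} (hK : 0 ≤ K) (hD : 0 ≤ D) {u : ℕ → ℝ → ℝ}
    (hcont : ∀ n, ContinuousOn (u n) (Set.Icc 0 T))
    (h0 : ∀ t ∈ Set.Icc (0:ℝ) T, u 0 t ≤ D)
    (hstep : ∀ n, ∀ t ∈ Set.Icc (0:ℝ) T, u (n + 1) t ≤ ∫ s in (0:ℝ)..t, K * u n s) :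
    ∀ n, ∀ t ∈ Set.Icc (0:ℝ) T, u n t ≤ D * (K ^ n * t ^ n / n.factorial) := by
  intro n
  induction n with
  | zero => intro t ht; simpa using h0 t ht
  | succ n ih =>
    intro t ht
    have ht0 : (0:ℝ) ≤ t := ht.1
    have hsub : Set.Icc (0:ℝ) t ⊆ Set.Icc (0:ℝ) T := Set.Icc_subset_Icc le_rfl ht.2
    have hint1 : IntervalIntegrable (fun s => K * u n s) volume 0 t := by
      apply ContinuousOn.intervalIntegrable
      rw [Set.uIcc_of_le ht0]
      exact (continuousOn_const.mul ((hcont n).mono hsub))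
    have hint2 : IntervalIntegrable
        (fun s => K * (D * (K ^ n * s ^ n / n.factorial))) volume 0 t := by
      apply Continuous.intervalIntegrable; continuity
    calc u (n + 1) t ≤ ∫ s in (0:ℝ)..t, K * u n s := hstep n t ht
      _ ≤ ∫ s in (0:ℝ)..t, K * (D * (K ^ n * s ^ n / n.factorial)) := by
          apply intervalIntegral.integral_mono_on ht0 hint1 hint2
          intro s hs
          exact mul_le_mul_of_nonneg_left (ih s (hsub hs)) hK
      _ = D * (K ^ (n+1) * t ^ (n+1) / (n+1).factorial) := by
          have he : (fun s => K * (D * (K ^ n * s ^ n / n.factorial)))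
              = fun s => (K * D * K ^ n / n.factorial) * s ^ n := by
            funext s; ring
          rw [he, intervalIntegral.integral_const_mul, integral_pow]
          have hfact : ((n+1).factorial : ℝ) = (n+1) * n.factorial := by
            rw [Nat.factorial_succ]; push_cast; ring
          rw [hfact]
          have hnf : (n.factorial : ℝ) ≠ 0 := Nat.cast_ne_zero.2 n.factorial_ne_zero
          have hn1 : ((n:ℝ) + 1) ≠ 0 := by positivity
          field_simp
          ring
  
end SDEAux



open SDEAux in
/-- **Lemma (measurability of pathwise solutions of additive noise SDEs).** -/
theorem pathwise_solution_is_stochastic_process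
    (d : ℕ) (hd : 0 < d) (T : ℝ) (hT : 0 ≤ T)
    (f : ℝ → (Fin d → ℝ) → (Fin d → ℝ))
    (hfc : ContinuousOn (fun p : ℝ × (Fin d → ℝ) => f p.1 p.2)
      (Set.Icc 0 T ×ˢ Set.univ))
    (ξ : Fin d → ℝ)
    {Ω : Type*} [MeasurableSpace Ω] (P : Measure Ω) [IsProbabilityMeasure P]
    (W : ℝ → Ω → (Fin d → ℝ))
    (hWmeas : ∀ t ∈ Set.Icc (0 : ℝ) T, Measurable (W t))
    (hWcont : ∀ ω, ContinuousOn (fun t => W t ω) (Set.Icc (0 : ℝ) T))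
    (Nd : (Fin d → ℝ) → ℝ) (hNd : IsNorm Nd)
    (hlip : ∀ r : ℝ, 0 < r → ∃ L : ℝ, ∀ t ∈ Set.Icc (0 : ℝ) T,
      ∀ x y : Fin d → ℝ, x ≠ y → Nd x + Nd y ≤ r →
        Nd (f t x - f t y) ≤ L * Nd (x - y))
    (Y : ℝ → Ω → (Fin d → ℝ))
    (hYcont : ∀ ω, ContinuousOn (fun t => Y t ω) (Set.Icc (0 : ℝ) T))
    (hYeq : ∀ t ∈ Set.Icc (0 : ℝ) T, ∀ ω,
      Y t ω = ξ + (∫ s in (0 : ℝ)..t, f s (Y s ω)) + W t ω) :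
    ∀ t ∈ Set.Icc (0 : ℝ) T, Measurable (fun ω => Y t ω) := by
  intro t ht
  obtain ⟨C, hC, hCle⟩ := exists_nd_le d hNd
  obtain ⟨c, hc, hcle⟩ := exists_le_nd d hd hNd
  -- local Lipschitz property of `f` in the standard norm
  have hlip' : ∀ R : ℝ, 0 ≤ R → ∃ K : ℝ, 0 ≤ K ∧ ∀ s ∈ Set.Icc (0:ℝ) T,
      ∀ x y : Fin d → ℝ, ‖x‖ ≤ R → ‖y‖ ≤ R → ‖f s x - f s y‖ ≤ K * ‖x - y‖ := by
    intro R hR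
    obtain ⟨L, hL⟩ := hlip (2 * C * R + 1) (by positivity)
    refine ⟨max L 0 * C / c, by positivity, fun s hs x y hx hy => ?_⟩
    rcases eq_or_ne x y with rfl | hxy
    · simp
    · have h1 : Nd x + Nd y ≤ 2 * C * R + 1 := by
        have e1 := hCle x
        have e2 := hCle y
        nlinarith [norm_nonneg x, norm_nonneg y]
      have h2 := hL s hs x y hxy h1
      have h3 : Nd (f s x - f s y) ≤ max L 0 * C * ‖x - y‖ := by
        calc Nd (f s x - f s y) ≤ L * Nd (x - y) := h2
          _ ≤ max L 0 * Nd (x - y) :=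
              mul_le_mul_of_nonneg_right (le_max_left _ _) (isNorm_nonneg hNd _)
          _ ≤ max L 0 * (C * ‖x - y‖) :=
              mul_le_mul_of_nonneg_left (hCle _) (le_max_right _ _)
          _ = max L 0 * C * ‖x - y‖ := by ring
      have h4 := hcle (f s x - f s y)
      rw [div_mul_eq_mul_div, le_div_iff₀ hc]
      nlinarith
  -- the clamping function
  set τ : ℝ → ℝ := fun s => min (max s 0) T with hτdef
  have hτmem : ∀ s, τ s ∈ Set.Icc (0:ℝ) T :=
    fun s => ⟨le_min (le_max_right s 0) hT, min_le_right _ _⟩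
  have hτid : ∀ s ∈ Set.Icc (0:ℝ) T, τ s = s := by
    intro s hs
    simp only [hτdef]
    rw [max_eq_left hs.1, min_eq_left hs.2]
  have hτcont : Continuous τ := (continuous_id.max continuous_const).min continuous_const
  -- main step: for each truncation level m there is a measurable function that
  -- agrees with `Y t` on paths bounded by `m`.
  have key : ∀ m : ℕ, ∃ G : Ω → (Fin d → ℝ), Measurable G ∧
      ∀ ω, (∀ s ∈ Set.Icc (0:ℝ) T, ‖Y s ω‖ ≤ (m : ℝ)) → G ω = Y t ω := by
    intro m
    set R : ℝ := (m : ℝ) with hRdef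
    have hR : 0 ≤ R := Nat.cast_nonneg m
    set p : (Fin d → ℝ) → (Fin d → ℝ) := projB R with hpdef
    set g : ℝ → (Fin d → ℝ) → (Fin d → ℝ) := fun s x => f (τ s) (p x) with hgdef
    have hpcont : Continuous p := continuous_projB hR
    -- joint continuity of g
    have hgc : Continuous fun q : ℝ × (Fin d → ℝ) => g q.1 q.2 := by
      have hmap : ∀ q : ℝ × (Fin d → ℝ),
          ((τ q.1, p q.2) : ℝ × (Fin d → ℝ)) ∈ Set.Icc (0:ℝ) T ×ˢ (Set.univ : Set (Fin d → ℝ)) :=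
        fun q => ⟨hτmem q.1, Set.mem_univ _⟩
      exact hfc.comp_continuous ((hτcont.comp continuous_fst).prodMk
        (hpcont.comp continuous_snd)) hmap
    -- uniform bound on g
    obtain ⟨M, hM⟩ := (isCompact_Icc.prod (isCompact_closedBall (0 : Fin d → ℝ) R)).exists_bound_of_continuousOn
      (hfc.mono (Set.prod_mono le_rfl (Set.subset_univ _)))
    have hM0 : 0 ≤ M :=
      le_trans (norm_nonneg _) (hM (0, 0) ⟨⟨le_rfl, hT⟩, Metric.mem_closedBall_self hR⟩)
    have hgbd : ∀ s x, ‖g s x‖ ≤ M := by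
      intro s x
      exact hM (τ s, p x) ⟨hτmem s, by
        rw [Metric.mem_closedBall, dist_zero_right]; exact norm_projB_le hR x⟩
    -- Lipschitz bound on g
    obtain ⟨K₀, hK₀, hlipR⟩ := hlip' R hR
    set K : ℝ := 2 * K₀ with hKdef
    have hK : 0 ≤ K := by positivity
    have hglip : ∀ s x y, ‖g s x - g s y‖ ≤ K * ‖x - y‖ := by
      intro s x y
      calc ‖f (τ s) (p x) - f (τ s) (p y)‖ ≤ K₀ * ‖p x - p y‖ :=
            hlipR (τ s) (hτmem s) _ _ (norm_projB_le hR x) (norm_projB_le hR y)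
        _ ≤ K₀ * (2 * ‖x - y‖) :=
            mul_le_mul_of_nonneg_left (norm_projB_sub_le hR x y) hK₀
        _ = K * ‖x - y‖ := by rw [hKdef]; ring
    -- for x in the ball, g is f (on [0,T])
    have hgf : ∀ s ∈ Set.Icc (0:ℝ) T, ∀ x : Fin d → ℝ, ‖x‖ ≤ R → g s x = f s x := by
      intro s hs x hx
      simp only [hgdef]
      rw [hτid s hs, hpdef, projB_eq_self hx]
    -- Picard iterates
    set Z : ℕ → ℝ → Ω → (Fin d → ℝ) :=
      fun n u ω => picard ξ (fun v => W v ω) g τ n u with hZdef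
    -- continuity of iterates in time
    have hZcont : ∀ n ω, ContinuousOn (fun u => Z n u ω) (Set.Icc (0:ℝ) T) := by
      intro n
      induction n with
      | zero =>
        intro ω
        simp only [hZdef, picard]
        exact continuousOn_const.add (hWcont ω)
      | succ n ih =>
        intro ω
        have hic : Continuous fun s => g s (Z n (τ s) ω) := by
          have h1 : Continuous fun s => Z n (τ s) ω :=
            (ih ω).comp_continuous hτcont hτmem
          exact hgc.comp (continuous_id.prodMk h1)
        have h2 : Continuous fun u => ∫ s in (0:ℝ)..u, g s (Z n (τ s) ω) :=
          intervalIntegral.continuous_primitive (fun a b => hic.intervalIntegrable a b) 0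
        simp only [hZdef, picard]
        exact (continuousOn_const.add (hWcont ω)).add h2.continuousOn
    -- measurability of iterates in ω
    have hZmeas : ∀ n, ∀ u ∈ Set.Icc (0:ℝ) T, Measurable fun ω => Z n u ω := by
      intro n
      induction n with
      | zero =>
        intro u hu
        simp only [hZdef, picard]
        exact measurable_const.add (hWmeas u hu)
      | succ n ih =>
        intro u hu
        have hFcont : ∀ ω, Continuous fun s => g s (Z n (τ s) ω) := by
          intro ω
          have h1 : Continuous fun s => Z n (τ s) ω :=
            (hZcont n ω).comp_continuous hτcont hτmem
          exact hgc.comp (continuous_id.prodMk h1)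
        have hFmeas : ∀ s : ℝ, Measurable fun ω => g s (Z n (τ s) ω) := by
          intro s
          have h1 : Measurable fun ω => Z n (τ s) ω := ih (τ s) (hτmem s)
          have h2 : Continuous fun x : Fin d → ℝ => g s x :=
            hgc.comp (Continuous.prodMk_right s)
          exact h2.measurable.comp h1
        have hunc : Measurable (Function.uncurry fun s ω => g s (Z n (τ s) ω)) :=
          measurable_uncurry_of_continuous_of_measurable hFcont hFmeas
        have hswap : StronglyMeasurable fun q : Ω × ℝ => g q.2 (Z n (τ q.2) q.1) :=
          (hunc.stronglyMeasurable).comp_measurable measurable_swap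
        have hint : Measurable fun ω => ∫ s in Set.Ioc (0:ℝ) u, g s (Z n (τ s) ω) :=
          (hswap.integral_prod_right').measurable
        have he : (fun ω => Z (n+1) u ω)
            = fun ω => ξ + W u ω + ∫ s in Set.Ioc (0:ℝ) u, g s (Z n (τ s) ω) := by
          funext ω
          simp only [hZdef, picard]
          rw [intervalIntegral.integral_of_le hu.1]
        rw [he]
        exact (measurable_const.add (hWmeas u hu)).add hint
    -- Cauchy estimate
    have hdiff : ∀ ω, ∀ n, ∀ u ∈ Set.Icc (0:ℝ) T,
        ‖Z (n+1) u ω - Z n u ω‖ ≤ (M * T) * (K ^ n * u ^ n / n.factorial) := by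
      intro ω
      have hMT : 0 ≤ M * T := mul_nonneg hM0 hT
      refine iterate_bound hK hMT (u := fun n u => ‖Z (n+1) u ω - Z n u ω‖) ?_ ?_ ?_
      · intro n
        exact (((hZcont (n+1) ω).sub (hZcont n ω)).norm)
      · intro u hu
        show ‖Z 1 u ω - Z 0 u ω‖ ≤ M * T
        have he : Z 1 u ω - Z 0 u ω = ∫ s in (0:ℝ)..u, g s (Z 0 (τ s) ω) := by
          simp only [hZdef, picard]
          abel
        rw [he]
        calc ‖∫ s in (0:ℝ)..u, g s (Z 0 (τ s) ω)‖ ≤ M * |u - 0| :=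
              intervalIntegral.norm_integral_le_of_norm_le_const fun s _ => hgbd _ _
          _ ≤ M * T := by
              rw [sub_zero, abs_of_nonneg hu.1]
              exact mul_le_mul_of_nonneg_left hu.2 hM0
      · intro n u hu
        show ‖Z (n+2) u ω - Z (n+1) u ω‖ ≤ ∫ s in (0:ℝ)..u, K * ‖Z (n+1) s ω - Z n s ω‖
        have hsub : Set.Icc (0:ℝ) u ⊆ Set.Icc (0:ℝ) T := Set.Icc_subset_Icc le_rfl hu.2
        have hic : ∀ k, Continuous fun s => g s (Z k (τ s) ω) := by
          intro k
          have h1 : Continuous fun s => Z k (τ s) ω :=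
            (hZcont k ω).comp_continuous hτcont hτmem
          exact hgc.comp (continuous_id.prodMk h1)
        have hi1 : IntervalIntegrable (fun s => g s (Z (n+1) (τ s) ω)) volume 0 u :=
          (hic (n+1)).intervalIntegrable 0 u
        have hi0 : IntervalIntegrable (fun s => g s (Z n (τ s) ω)) volume 0 u :=
          (hic n).intervalIntegrable 0 u
        have he : Z (n+2) u ω - Z (n+1) u ω
            = ∫ s in (0:ℝ)..u, (g s (Z (n+1) (τ s) ω) - g s (Z n (τ s) ω)) := by
          rw [intervalIntegral.integral_sub hi1 hi0]
          simp only [hZdef, picard]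
          abel
        rw [he]
        have hnic : IntervalIntegrable
            (fun s => ‖g s (Z (n+1) (τ s) ω) - g s (Z n (τ s) ω)‖) volume 0 u :=
          (((hic (n+1)).sub (hic n)).norm).intervalIntegrable 0 u
        have hKic : IntervalIntegrable
            (fun s => K * ‖Z (n+2-1) s ω - Z n s ω‖) volume 0 u := by
          apply ContinuousOn.intervalIntegrable
          rw [Set.uIcc_of_le hu.1]
          exact continuousOn_const.mul
            ((((hZcont (n+1) ω).sub (hZcont n ω)).norm).mono hsub)
        calc ‖∫ s in (0:ℝ)..u, (g s (Z (n+1) (τ s) ω) - g s (Z n (τ s) ω))‖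
            ≤ ∫ s in (0:ℝ)..u, ‖g s (Z (n+1) (τ s) ω) - g s (Z n (τ s) ω)‖ :=
              intervalIntegral.norm_integral_le_integral_norm hu.1
          _ ≤ ∫ s in (0:ℝ)..u, K * ‖Z (n+1) s ω - Z n s ω‖ := by
              apply intervalIntegral.integral_mono_on hu.1 hnic
              · exact hKic
              · intro s hs
                have hsT : s ∈ Set.Icc (0:ℝ) T := hsub hs
                rw [hτid s hsT]
                exact hglip s _ _
    -- the iterates form a Cauchy sequence at time t
    have hcauchy : ∀ ω, CauchySeq fun n => Z n t ω := by
      intro ω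
      apply cauchySeq_of_summable_dist
      have hsum : Summable fun n : ℕ => (M * T) * ((K * t) ^ n / n.factorial) :=
        (Real.summable_pow_div_factorial (K * t)).mul_left _
      apply Summable.of_nonneg_of_le (fun n => dist_nonneg) (fun n => ?_) hsum
      rw [dist_eq_norm, norm_sub_rev]
      calc ‖Z (n+1) t ω - Z n t ω‖ ≤ (M * T) * (K ^ n * t ^ n / n.factorial) :=
            hdiff ω n t ht
        _ = (M * T) * ((K * t) ^ n / n.factorial) := by rw [hKdef]; ring
    set G : Ω → (Fin d → ℝ) := fun ω => limUnder atTop (fun n => Z n t ω) with hGdef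
    have hGtend : ∀ ω, Tendsto (fun n => Z n t ω) atTop (nhds (G ω)) :=
      fun ω => (hcauchy ω).tendsto_limUnder
    have hGmeas : Measurable G :=
      measurable_of_tendsto_metrizable (fun n => hZmeas n t ht)
        (tendsto_pi_nhds.mpr hGtend)
    refine ⟨G, hGmeas, ?_⟩
    -- agreement with Y on paths bounded by m
    intro ω hbY
    have hfy : ∀ s ∈ Set.Icc (0:ℝ) T, g s (Y s ω) = f s (Y s ω) :=
      fun s hs => hgf s hs _ (hbY s hs)
    have hYic : ContinuousOn (fun s => f s (Y s ω)) (Set.Icc (0:ℝ) T) := by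
      have h1 : ContinuousOn (fun s => ((s, Y s ω) : ℝ × (Fin d → ℝ)))
          (Set.Icc (0:ℝ) T) := continuousOn_id.prodMk (hYcont ω)
      exact hfc.comp h1 fun s hs => ⟨hs, Set.mem_univ _⟩
    have hest2 : ∀ n, ∀ u ∈ Set.Icc (0:ℝ) T,
        ‖Z n u ω - Y u ω‖ ≤ (M * T) * (K ^ n * u ^ n / n.factorial) := by
      have hMT : 0 ≤ M * T := mul_nonneg hM0 hT
      refine iterate_bound hK hMT (u := fun n u => ‖Z n u ω - Y u ω‖) ?_ ?_ ?_
      · intro n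
        exact ((hZcont n ω).sub (hYcont ω)).norm
      · intro u hu
        show ‖Z 0 u ω - Y u ω‖ ≤ M * T
        have he : Z 0 u ω - Y u ω = -(∫ s in (0:ℝ)..u, f s (Y s ω)) := by
          rw [hYeq u hu ω]
          simp only [hZdef, picard]
          abel
        rw [he, norm_neg]
        calc ‖∫ s in (0:ℝ)..u, f s (Y s ω)‖ ≤ M * |u - 0| := by
              apply intervalIntegral.norm_integral_le_of_norm_le_const
              intro s hs
              have hsT : s ∈ Set.Icc (0:ℝ) T := by
                rw [Set.uIoc_of_le hu.1] at hs
                exact ⟨hs.1.le, le_trans hs.2 hu.2⟩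
              rw [← hfy s hsT]
              exact hgbd _ _
          _ ≤ M * T := by
              rw [sub_zero, abs_of_nonneg hu.1]
              exact mul_le_mul_of_nonneg_left hu.2 hM0
      · intro n u hu
        show ‖Z (n+1) u ω - Y u ω‖ ≤ ∫ s in (0:ℝ)..u, K * ‖Z n s ω - Y s ω‖
        have hsub : Set.Icc (0:ℝ) u ⊆ Set.Icc (0:ℝ) T := Set.Icc_subset_Icc le_rfl hu.2
        have hic : Continuous fun s => g s (Z n (τ s) ω) := by
          have h1 : Continuous fun s => Z n (τ s) ω :=
            (hZcont n ω).comp_continuous hτcont hτmem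
          exact hgc.comp (continuous_id.prodMk h1)
        have hi1 : IntervalIntegrable (fun s => g s (Z n (τ s) ω)) volume 0 u :=
          hic.intervalIntegrable 0 u
        have hi0 : IntervalIntegrable (fun s => f s (Y s ω)) volume 0 u := by
          apply ContinuousOn.intervalIntegrable
          rw [Set.uIcc_of_le hu.1]
          exact hYic.mono hsub
        have he : Z (n+1) u ω - Y u ω
            = ∫ s in (0:ℝ)..u, (g s (Z n (τ s) ω) - f s (Y s ω)) := by
          rw [intervalIntegral.integral_sub hi1 hi0, hYeq u hu ω]
          simp only [hZdef, picard]
          abel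
        rw [he]
        have hnic : IntervalIntegrable
            (fun s => ‖g s (Z n (τ s) ω) - f s (Y s ω)‖) volume 0 u := by
          apply ContinuousOn.intervalIntegrable
          rw [Set.uIcc_of_le hu.1]
          exact ((hic.continuousOn.sub (hYic.mono hsub)).norm)
        have hKic : IntervalIntegrable
            (fun s => K * ‖Z n s ω - Y s ω‖) volume 0 u := by
          apply ContinuousOn.intervalIntegrable
          rw [Set.uIcc_of_le hu.1]
          exact continuousOn_const.mul
            ((((hZcont n ω).sub (hYcont ω)).norm).mono hsub)
        calc ‖∫ s in (0:ℝ)..u, (g s (Z n (τ s) ω) - f s (Y s ω))‖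
            ≤ ∫ s in (0:ℝ)..u, ‖g s (Z n (τ s) ω) - f s (Y s ω)‖ :=
              intervalIntegral.norm_integral_le_integral_norm hu.1
          _ ≤ ∫ s in (0:ℝ)..u, K * ‖Z n s ω - Y s ω‖ := by
              apply intervalIntegral.integral_mono_on hu.1 hnic hKic
              intro s hs
              have hsT : s ∈ Set.Icc (0:ℝ) T := hsub hs
              rw [hτid s hsT, ← hfy s hsT]
              exact hglip s _ _
    have hZtY : Tendsto (fun n => Z n t ω) atTop (nhds (Y t ω)) := by
      rw [tendsto_iff_norm_sub_tendsto_zero]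
      have hlim : Tendsto (fun n : ℕ => (M * T) * ((K * t) ^ n / n.factorial))
          atTop (nhds 0) := by
        have := (FloorSemiring.tendsto_pow_div_factorial_atTop (K * t)).const_mul (M * T)
        simpa using this
      apply squeeze_zero (fun n => norm_nonneg _) (fun n => ?_) hlim
      calc ‖Z n t ω - Y t ω‖ ≤ (M * T) * (K ^ n * t ^ n / n.factorial) :=
            hest2 n t ht
        _ = (M * T) * ((K * t) ^ n / n.factorial) := by rw [hKdef]; ring
    exact tendsto_nhds_unique (hGtend ω) hZtY
  -- conclude: Y t is an everywhere pointwise limit of the G m as m → ∞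
  choose G hGmeas hGagree using key
  have hlim : ∀ ω, Tendsto (fun m => G m ω) atTop (nhds (Y t ω)) := by
    intro ω
    obtain ⟨Cb, hCb⟩ := isCompact_Icc.exists_bound_of_continuousOn (hYcont ω)
    obtain ⟨m₀, hm₀⟩ := exists_nat_ge Cb
    apply tendsto_atTop_of_eventually_const (i₀ := m₀)
    intro m hm
    exact hGagree m ω fun s hs =>
      le_trans (hCb s hs) (le_trans hm₀ (Nat.cast_le.2 hm))
  exact measurable_of_tendsto_metrizable (fun m => hGmeas m) (tendsto_pi_nhds.mpr hlim)
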